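/- arXiv:2507.14834 — 4 statements merged into one kernel-verified Lean document; each statement's English description precedes it below -/
import Mathlib

section
/- Let G be a group, c ∈ G central with c² = 1, and define b_{σ,τ} as above. For a subset Φ ⊆ G set B_Φ = Σ_{σ∈Φ} Σ_{τ∈Φ} b_{σ,τ}. Suppose Φ = Ψ ∪ {α, β} with α, β ∉ Ψ, α ≠ β, and set Φ₀₀ = Φ, Φ₀₁ = Ψ ∪ {α, cβ}, Φ₁₀ = Ψ ∪ {cα, β}, Φ₁₁ = Ψ ∪ {cα, cβ}. Assume that the four sets Ψ, {α, cα}, {β, cβ} are pairwise disjoint (so all the unions above are disjoint and have cardinality |Ψ| + 2). Then B_{Φ₀₀} - B_{Φ₁₀} - B_{Φ₀₁} + B_{Φ₁₁} = 4·(b_{α,β} + b_{β,α}) as functions G → ℤ. -/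
/-- `b_{σ,τ}(g) = 1` if `gσ = τ`, `-1` if `gσ = cτ`, `0` otherwise. -/
def bfun {G : Type*} [Group G] [DecidableEq G] (c σ τ : G) : G → ℤ :=
  fun g => if g * σ = τ then 1 else if g * σ = c * τ then -1 else 0

/-- `B_Φ = Σ_{σ∈Φ} Σ_{τ∈Φ} b_{σ,τ}`. -/
def Bfun {G : Type*} [Group G] [DecidableEq G] (c : G) (Φ : Finset G) : G → ℤ :=
  fun g => ∑ σ ∈ Φ, ∑ τ ∈ Φ, bfun c σ τ g

lemma bfun_cL {G : Type*} [Group G] [DecidableEq G] (c σ τ : G)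
    (hcentral : ∀ x : G, c * x = x * c) (hc2 : c * c = 1) (hτ : c * τ ≠ τ) (g : G) :
    bfun c (c * σ) τ g = - bfun c σ τ g := by
  have hc1 : c ≠ 1 := fun h => hτ (by simp [h])
  have hσc : g * (c * σ) = g * σ * c := by rw [hcentral σ, ← mul_assoc]
  have hkey : ∀ a b : G, (a * c = b ↔ a = c * b) := by
    intro a b
    constructor
    · intro h; rw [← h, hcentral, mul_assoc, hc2, mul_one]
    · intro h; rw [h, hcentral b, mul_assoc, hc2, mul_one]
  have h1 : g * (c * σ) = τ ↔ g * σ = c * τ := by rw [hσc, hkey]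
  have h2 : g * (c * σ) = c * τ ↔ g * σ = τ := by
    rw [hσc, hkey, ← mul_assoc, hc2, one_mul]
  unfold bfun
  by_cases ha : g * σ = τ
  · have hb : g * σ ≠ c * τ := by rw [ha]; exact fun h => hτ h.symm
    simp [ha, hb, h1, h2, hc1]
  · by_cases hb : g * σ = c * τ
    · simp [ha, hb, h1, h2, hc1]
    · simp [ha, hb, h1, h2, hc1]

lemma bfun_cR {G : Type*} [Group G] [DecidableEq G] (c σ τ : G)
    (hcentral : ∀ x : G, c * x = x * c) (hc2 : c * c = 1) (hτ : c * τ ≠ τ) (g : G) :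
    bfun c σ (c * τ) g = - bfun c σ τ g := by
  have hc1 : c ≠ 1 := fun h => hτ (by simp [h])
  have hcc : c * (c * τ) = τ := by rw [← mul_assoc, hc2, one_mul]
  unfold bfun
  rw [hcc]
  by_cases ha : g * σ = τ
  · have hb : g * σ ≠ c * τ := by rw [ha]; exact fun h => hτ h.symm
    simp [ha, hb, hc1]
  · by_cases hb : g * σ = c * τ
    · simp [ha, hb, hc1]
    · simp [ha, hb]

lemma expand4 {G : Type*} [DecidableEq G] (Ψ : Finset G) (x y : G) (hxy : x ≠ y)
    (hd : Disjoint Ψ ({x, y} : Finset G)) (f : G → G → ℤ) :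
    ∑ σ ∈ Ψ ∪ {x, y}, ∑ τ ∈ Ψ ∪ {x, y}, f σ τ
      = (∑ σ ∈ Ψ, ∑ τ ∈ Ψ, f σ τ) + (∑ σ ∈ Ψ, f σ x) + (∑ σ ∈ Ψ, f σ y)
        + (∑ τ ∈ Ψ, f x τ) + (∑ τ ∈ Ψ, f y τ)
        + (f x x + f x y + f y x + f y y) := by
  rw [Finset.sum_union hd]
  simp only [Finset.sum_union hd, Finset.sum_pair hxy, Finset.sum_add_distrib]
  ring

theorem stmt3 {G : Type*} [Group G] [DecidableEq G] (c : G)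
    (hcentral : ∀ x : G, c * x = x * c) (hc2 : c * c = 1)
    (Ψ : Finset G) (α β : G) (hαβ : α ≠ β)
    (hα : c * α ≠ α) (hβ : c * β ≠ β) (hΨ : ∀ σ ∈ Ψ, c * σ ≠ σ)
    (hdisj1 : Disjoint Ψ ({α, c * α} : Finset G))
    (hdisj2 : Disjoint Ψ ({β, c * β} : Finset G))
    (hdisj3 : Disjoint ({α, c * α} : Finset G) ({β, c * β} : Finset G)) :
    Bfun c (Ψ ∪ {α, β}) - Bfun c (Ψ ∪ {c * α, β}) - Bfun c (Ψ ∪ {α, c * β})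
      + Bfun c (Ψ ∪ {c * α, c * β})
      = fun g => 4 * (bfun c α β g + bfun c β α g) := by
  have hmemα : ∀ x ∈ ({α, c * α} : Finset G), x ∉ Ψ :=
    fun x hx => Finset.disjoint_right.mp hdisj1 hx
  have hmemβ : ∀ y ∈ ({β, c * β} : Finset G), y ∉ Ψ :=
    fun y hy => Finset.disjoint_right.mp hdisj2 hy
  have hdisj : ∀ x ∈ ({α, c * α} : Finset G), ∀ y ∈ ({β, c * β} : Finset G),
      Disjoint Ψ ({x, y} : Finset G) := by
    intro x hx y hy
    rw [Finset.disjoint_right]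
    intro a ha
    simp only [Finset.mem_insert, Finset.mem_singleton] at ha
    rcases ha with h | h
    · subst h; exact hmemα _ hx
    · subst h; exact hmemβ _ hy
  have hne : ∀ x ∈ ({α, c * α} : Finset G), ∀ y ∈ ({β, c * β} : Finset G), x ≠ y := by
    intro x hx y hy h
    exact Finset.disjoint_left.mp hdisj3 hx (h ▸ hy)
  have mαα : α ∈ ({α, c * α} : Finset G) := by simp
  have mcα : c * α ∈ ({α, c * α} : Finset G) := by simp
  have mββ : β ∈ ({β, c * β} : Finset G) := by simp
  have mcβ : c * β ∈ ({β, c * β} : Finset G) := by simp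
  have hccα : c * (c * α) ≠ c * α := by
    rw [← mul_assoc, hc2, one_mul]; exact fun h => hα h.symm
  have hccβ : c * (c * β) ≠ c * β := by
    rw [← mul_assoc, hc2, one_mul]; exact fun h => hβ h.symm
  funext g
  simp only [Pi.add_apply, Pi.sub_apply, Bfun]
  rw [expand4 Ψ α β (hne _ mαα _ mββ) (hdisj _ mαα _ mββ),
      expand4 Ψ (c * α) β (hne _ mcα _ mββ) (hdisj _ mcα _ mββ),
      expand4 Ψ α (c * β) (hne _ mαα _ mcβ) (hdisj _ mαα _ mcβ),
      expand4 Ψ (c * α) (c * β) (hne _ mcα _ mcβ) (hdisj _ mcα _ mcβ)]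
  rw [bfun_cL c α β hcentral hc2 hβ g,
      bfun_cR c β α hcentral hc2 hα g,
      bfun_cR c α β hcentral hc2 hβ g,
      bfun_cL c β α hcentral hc2 hα g,
      bfun_cL c α (c * β) hcentral hc2 hccβ g,
      bfun_cL c β (c * α) hcentral hc2 hccα g,
      bfun_cR c α β hcentral hc2 hβ g,
      bfun_cR c β α hcentral hc2 hα g]
  ring
end

section
/- Let G be a finite group and c ∈ G a central element of order exactly 2. A CM type is a subset Φ ⊆ G containing exactly one element of each coset {g, cg}. Let V ⊆ Maps(G, ℚ) be the space of functions a with a(cg) = -a(g) for all g, and let W ⊆ V be the subspace of functions that are moreover even, i.e. a(g⁻¹) = a(g) for all g. Then the ℚ-linear span of the functions B_Φ = Σ_{σ,τ∈Φ} b_{σ,τ}, taken over all CM types Φ, equals W. -/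
/-- The ℚ-valued version of `b_{σ,τ}`: `1` if `gσ = τ`, `-1` if `gσ = cτ`, `0` otherwise. -/
def bQ {G : Type*} [Group G] [DecidableEq G] (c σ τ : G) : G → ℚ :=
  fun g => if g * σ = τ then 1 else if g * σ = c * τ then -1 else 0

namespace Stmt4Aux
set_option linter.unusedSectionVars false

open Finset

variable {G : Type*} [Group G] [Fintype G] [DecidableEq G] {c : G}

def eps (Φ : Finset G) (g : G) : ℚ := if g ∈ Φ then 1 else -1

def Bf (Φ : Finset G) : G → ℚ := fun g => ∑ σ ∈ Φ, eps Φ (g * σ)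

def dfun (c : G) : G → ℚ := fun g => (if g = 1 then 1 else 0) - (if g = c then 1 else 0)

def wfun (c h : G) : G → ℚ := fun g =>
  ((if g = h then 1 else 0) - (if g = c * h then 1 else 0))
  + ((if g⁻¹ = h then 1 else 0) - (if g⁻¹ = c * h then 1 else 0))

lemma hcc (hc2 : c * c = 1) (x : G) : c * (c * x) = x := by
  rw [← mul_assoc, hc2, one_mul]

lemma cne (hc1 : c ≠ 1) (x : G) : c * x ≠ x := by
  intro h
  exact hc1 (by simpa using h)

lemma cinv (hc2 : c * c = 1) : c⁻¹ = c :=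
  inv_eq_of_mul_eq_one_right hc2

lemma cm_notMem (hc2 : c * c = 1) {Φ : Finset G} (hΦ : ∀ g, g ∈ Φ ↔ c * g ∉ Φ) (x : G) :
    c * x ∈ Φ ↔ x ∉ Φ := by
  simpa [hcc hc2] using hΦ (c * x)

lemma eps_c (hc2 : c * c = 1) {Φ : Finset G} (hΦ : ∀ g, g ∈ Φ ↔ c * g ∉ Φ) (x : G) :
    eps Φ (c * x) = - eps Φ x := by
  by_cases h : x ∈ Φ
  · have h2 : c * x ∉ Φ := by rw [cm_notMem hc2 hΦ]; simpa
    simp [eps, h, h2]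
  · have h2 : c * x ∈ Φ := (cm_notMem hc2 hΦ x).2 h
    simp [eps, h, h2]


lemma inner_sum (hc2 : c * c = 1) (hc1 : c ≠ 1) {Φ : Finset G}
    (hΦ : ∀ g, g ∈ Φ ↔ c * g ∉ Φ) (σ g : G) :
    ∑ τ ∈ Φ, bQ c σ τ g = eps Φ (g * σ) := by
  have key : ∀ τ : G, bQ c σ τ g =
      (if g * σ = τ then (1:ℚ) else 0) - (if c * (g * σ) = τ then (1:ℚ) else 0) := by
    intro τ
    unfold bQ
    by_cases h1 : g * σ = τ
    · have h2 : g * σ ≠ c * τ := by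
        rw [← h1]; intro hh; exact cne hc1 (g*σ) hh.symm
      have h3 : c * (g * σ) ≠ τ := by
        rw [h1]; exact cne hc1 τ
      simp [h1, h2, h3, hc1]
    · by_cases h2 : g * σ = c * τ
      · have h3 : c * (g * σ) = τ := by rw [h2, hcc hc2]
        simp only [if_neg h1, if_pos h2, if_pos h3]
        norm_num
      · have h3 : c * (g * σ) ≠ τ := by
          intro hh; exact h2 (by rw [← hh, hcc hc2])
        simp [h1, h2, h3]
  calc ∑ τ ∈ Φ, bQ c σ τ g
      = ∑ τ ∈ Φ, ((if g * σ = τ then (1:ℚ) else 0) - (if c * (g * σ) = τ then (1:ℚ) else 0)) :=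
        Finset.sum_congr rfl (fun τ _ => key τ)
    _ = (if g * σ ∈ Φ then (1:ℚ) else 0) - (if c * (g * σ) ∈ Φ then (1:ℚ) else 0) := by
        rw [Finset.sum_sub_distrib, Finset.sum_ite_eq, Finset.sum_ite_eq]
    _ = eps Φ (g * σ) := by
        by_cases h : g * σ ∈ Φ
        · have h2 : c * (g * σ) ∉ Φ := by rw [cm_notMem hc2 hΦ]; simpa
          simp [eps, h, h2]
        · have h2 : c * (g * σ) ∈ Φ := (cm_notMem hc2 hΦ _).2 h
          simp [eps, h, h2]

lemma double_eq (hc2 : c * c = 1) (hc1 : c ≠ 1) {Φ : Finset G}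
    (hΦ : ∀ g, g ∈ Φ ↔ c * g ∉ Φ) :
    (fun g => ∑ σ ∈ Φ, ∑ τ ∈ Φ, bQ c σ τ g) = Bf Φ := by
  funext g
  exact Finset.sum_congr rfl (fun σ _ => inner_sum hc2 hc1 hΦ σ g)

lemma bf_odd (hc2 : c * c = 1) {Φ : Finset G} (hΦ : ∀ g, g ∈ Φ ↔ c * g ∉ Φ) (g : G) :
    Bf Φ (c * g) = - Bf Φ g := by
  unfold Bf
  rw [← Finset.sum_neg_distrib]
  refine Finset.sum_congr rfl (fun σ _ => ?_)
  rw [mul_assoc, eps_c hc2 hΦ]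

lemma bQ_symm (hcentral : ∀ x : G, c * x = x * c) (hc2 : c * c = 1) (σ τ g : G) :
    bQ c σ τ g⁻¹ = bQ c τ σ g := by
  unfold bQ
  have e1 : g⁻¹ * σ = τ ↔ g * τ = σ := by
    constructor
    · rintro rfl; group
    · rintro rfl; group
  have e2 : g⁻¹ * σ = c * τ ↔ g * τ = c * σ := by
    constructor
    · intro h
      have hσ : σ = g * (c * τ) := by rw [← h, mul_inv_cancel_left]
      subst hσ
      rw [show c * (g * (c * τ)) = g * (c * (c * τ)) by
        rw [← mul_assoc, hcentral g, mul_assoc], hcc hc2]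
    · intro h
      have hτ : τ = g⁻¹ * (c * σ) := by rw [← h, inv_mul_cancel_left]
      subst hτ
      rw [show c * (g⁻¹ * (c * σ)) = g⁻¹ * (c * (c * σ)) by
        rw [← mul_assoc, hcentral g⁻¹, mul_assoc], hcc hc2]
  simp only [e1, e2]

lemma bf_even (hcentral : ∀ x : G, c * x = x * c) (hc2 : c * c = 1) (hc1 : c ≠ 1)
    {Φ : Finset G} (hΦ : ∀ g, g ∈ Φ ↔ c * g ∉ Φ) (g : G) :
    Bf Φ g⁻¹ = Bf Φ g := by
  have h := double_eq hc2 hc1 hΦ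
  calc Bf Φ g⁻¹ = ∑ σ ∈ Φ, ∑ τ ∈ Φ, bQ c σ τ g⁻¹ := (congrFun h g⁻¹).symm
    _ = ∑ σ ∈ Φ, ∑ τ ∈ Φ, bQ c τ σ g :=
        Finset.sum_congr rfl (fun σ _ => Finset.sum_congr rfl
          (fun τ _ => bQ_symm hcentral hc2 σ τ g))
    _ = ∑ τ ∈ Φ, ∑ σ ∈ Φ, bQ c τ σ g := Finset.sum_comm
    _ = Bf Φ g := congrFun h g


lemma notMem_c (hc2 : c * c = 1) {Φ : Finset G} (hΦ : ∀ g, g ∈ Φ ↔ c * g ∉ Φ)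
    {σ₀ : G} (hσ₀ : σ₀ ∈ Φ) : c * σ₀ ∉ Φ :=
  fun h => (cm_notMem hc2 hΦ σ₀).1 h hσ₀

lemma flip_cm (hc2 : c * c = 1) (hc1 : c ≠ 1) {Φ : Finset G}
    (hΦ : ∀ g, g ∈ Φ ↔ c * g ∉ Φ) {σ₀ : G} (hσ₀ : σ₀ ∈ Φ) :
    ∀ g, g ∈ insert (c * σ₀) (Φ.erase σ₀) ↔ c * g ∉ insert (c * σ₀) (Φ.erase σ₀) := by
  intro g
  have hne := cne hc1 σ₀
  have hσc : c * σ₀ ∉ Φ := notMem_c hc2 hΦ hσ₀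
  by_cases h1 : g = σ₀
  · subst h1
    simp [Finset.mem_insert, Finset.mem_erase, hne, Ne.symm hne]
  · by_cases h2 : g = c * σ₀
    · subst h2
      simp [Finset.mem_insert, Finset.mem_erase, hcc hc2, hne, Ne.symm hne, hσ₀, hσc]
    · have h3 : c * g ≠ c * σ₀ := fun hh => h1 (mul_left_cancel hh)
      have h4 : c * g ≠ σ₀ := fun hh => h2 (by rw [← hh, hcc hc2])
      simp [Finset.mem_insert, Finset.mem_erase, h1, h2, h3, h4, hΦ g]

lemma eps_flip (hc2 : c * c = 1) (hc1 : c ≠ 1) {Φ : Finset G}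
    (hΦ : ∀ g, g ∈ Φ ↔ c * g ∉ Φ) {σ₀ : G} (hσ₀ : σ₀ ∈ Φ) (x : G) :
    eps (insert (c * σ₀) (Φ.erase σ₀)) x
      = eps Φ x - (if x = σ₀ then 2 else 0) + (if x = c * σ₀ then 2 else 0) := by
  have hne := cne hc1 σ₀
  have hσc : c * σ₀ ∉ Φ := notMem_c hc2 hΦ hσ₀
  by_cases h1 : x = σ₀
  · subst h1
    have hm : x ∉ insert (c * x) (Φ.erase x) := by
      simp [Finset.mem_insert, Finset.mem_erase, Ne.symm hne]
    rw [if_pos rfl, if_neg (Ne.symm hne)]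
    simp [eps, hm, hσ₀]
    norm_num
  · by_cases h2 : x = c * σ₀
    · subst h2
      have hm : c * σ₀ ∈ insert (c * σ₀) (Φ.erase σ₀) := Finset.mem_insert_self _ _
      rw [if_neg h1, if_pos rfl]
      simp [eps, hm, hσc]
      norm_num
    · have hm : x ∈ insert (c * σ₀) (Φ.erase σ₀) ↔ x ∈ Φ := by
        simp [Finset.mem_insert, Finset.mem_erase, h1, h2]
      rw [if_neg h1, if_neg h2]
      simp [eps, hm]


lemma key_diff (hcentral : ∀ x : G, c * x = x * c) (hc2 : c * c = 1) (hc1 : c ≠ 1)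
    {Φ : Finset G} (hΦ : ∀ g, g ∈ Φ ↔ c * g ∉ Φ) {σ₀ : G} (hσ₀ : σ₀ ∈ Φ) (g : G) :
    Bf Φ g - Bf (insert (c * σ₀) (Φ.erase σ₀)) g
      = 2 * eps Φ (g * σ₀) + 2 * eps Φ (g⁻¹ * σ₀) - 4 * dfun c g := by
  have hσc' : c * σ₀ ∉ Φ.erase σ₀ := by
    simp [Finset.mem_erase, notMem_c hc2 hΦ hσ₀]
  have hcard : ((insert (c * σ₀) (Φ.erase σ₀)).card) = Φ.card := by
    rw [Finset.card_insert_of_notMem hσc', Finset.card_erase_of_mem hσ₀]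
    exact Nat.succ_pred_eq_of_pos (Finset.card_pos.2 ⟨σ₀, hσ₀⟩)
  by_cases hg1 : g = 1
  · subst hg1
    have cB : ∀ (Ψ : Finset G), Bf Ψ (1:G) = (Ψ.card : ℚ) := by
      intro Ψ
      unfold Bf
      rw [Finset.sum_congr rfl (fun σ hσ => show eps Ψ (1 * σ) = 1 by
        rw [one_mul]; simp [eps, hσ])]
      simp
    rw [cB, cB, hcard, one_mul, inv_one, one_mul]
    simp [eps, hσ₀, dfun, Ne.symm hc1]
    norm_num
  · by_cases hgc : g = c
    · rw [hgc]
      have cmΦ' := flip_cm hc2 hc1 hΦ hσ₀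
      have cC : ∀ (Ψ : Finset G), (∀ x, x ∈ Ψ ↔ c * x ∉ Ψ) → Bf Ψ c = -(Ψ.card : ℚ) := by
        intro Ψ hΨ
        unfold Bf
        rw [Finset.sum_congr rfl (fun σ hσ => show eps Ψ (c * σ) = -1 by
          rw [eps_c hc2 hΨ]; simp [eps, hσ])]
        simp
      rw [cC Φ hΦ, cC _ cmΦ', hcard, cinv hc2]
      have he : eps Φ (c * σ₀) = -1 := by
        rw [eps_c hc2 hΦ]; simp [eps, hσ₀]
      rw [he]
      simp [dfun, hc1]
      ring
    · -- generic case
      have hg1' : g⁻¹ * σ₀ ≠ σ₀ := by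
        intro hh
        have h2 : g⁻¹ = 1 := mul_right_cancel (b := σ₀) (by rw [hh, one_mul])
        exact hg1 (by rwa [inv_eq_one] at h2)
      have hsplit1 : Bf Φ g = (∑ σ ∈ Φ.erase σ₀, eps Φ (g * σ)) + eps Φ (g * σ₀) := by
        unfold Bf
        exact (Finset.sum_erase_add Φ _ hσ₀).symm
      have hsplit2 : Bf (insert (c * σ₀) (Φ.erase σ₀)) g
          = eps (insert (c * σ₀) (Φ.erase σ₀)) (g * (c * σ₀))
            + ∑ σ ∈ Φ.erase σ₀, eps (insert (c * σ₀) (Φ.erase σ₀)) (g * σ) := by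
        unfold Bf
        rw [Finset.sum_insert hσc']
      have hmid : (∑ σ ∈ Φ.erase σ₀, eps Φ (g * σ))
          - (∑ σ ∈ Φ.erase σ₀, eps (insert (c * σ₀) (Φ.erase σ₀)) (g * σ))
          = 2 * eps Φ (g⁻¹ * σ₀) := by
        rw [← Finset.sum_sub_distrib]
        have e : ∀ σ ∈ Φ.erase σ₀,
            eps Φ (g * σ) - eps (insert (c * σ₀) (Φ.erase σ₀)) (g * σ)
            = (if σ = g⁻¹ * σ₀ then (2:ℚ) else 0) - (if σ = g⁻¹ * (c * σ₀) then (2:ℚ) else 0) := by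
          intro σ _
          rw [eps_flip hc2 hc1 hΦ hσ₀]
          have c1 : (g * σ = σ₀) = (σ = g⁻¹ * σ₀) :=
            propext ⟨fun h => by rw [← h]; group, fun h => by rw [h]; group⟩
          have c2 : (g * σ = c * σ₀) = (σ = g⁻¹ * (c * σ₀)) :=
            propext ⟨fun h => by rw [← h]; group, fun h => by rw [h]; group⟩
          simp only [c1, c2]
          ring
        rw [Finset.sum_congr rfl e, Finset.sum_sub_distrib, Finset.sum_ite_eq',
          Finset.sum_ite_eq']
        have hrw : g⁻¹ * (c * σ₀) = c * (g⁻¹ * σ₀) := by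
          rw [← mul_assoc, ← hcentral, mul_assoc]
        have hne2 : c * (g⁻¹ * σ₀) ≠ σ₀ := by
          intro hh
          apply hgc
          have h2 : c * g⁻¹ = 1 := mul_right_cancel (b := σ₀) (by rw [mul_assoc, hh, one_mul])
          have h3 : g⁻¹ = c⁻¹ := eq_inv_of_mul_eq_one_right h2
          rw [← inv_inv g, h3, inv_inv]
        have m1 : (g⁻¹ * σ₀ ∈ Φ.erase σ₀) = (g⁻¹ * σ₀ ∈ Φ) := by
          simp [Finset.mem_erase, hg1']
        have m2 : (g⁻¹ * (c * σ₀) ∈ Φ.erase σ₀) = (g⁻¹ * σ₀ ∉ Φ) := by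
          rw [hrw]
          simp [Finset.mem_erase, hne2, cm_notMem hc2 hΦ]
        simp only [m1, m2]
        by_cases hA : g⁻¹ * σ₀ ∈ Φ
        · rw [if_pos hA, if_neg (not_not_intro hA)]
          simp [eps, hA]
        · rw [if_neg hA, if_pos hA]
          simp [eps, hA]
      have hlast : eps (insert (c * σ₀) (Φ.erase σ₀)) (g * (c * σ₀)) = - eps Φ (g * σ₀) := by
        rw [eps_flip hc2 hc1 hΦ hσ₀]
        have d1 : g * (c * σ₀) ≠ σ₀ := by
          intro hh
          apply hgc
          have h2 : g * c = 1 := mul_right_cancel (b := σ₀) (by rw [mul_assoc, hh, one_mul])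
          rw [eq_inv_of_mul_eq_one_left h2, cinv hc2]
        have d2 : g * (c * σ₀) ≠ c * σ₀ := by
          intro hh
          exact hg1 (mul_right_cancel (b := c * σ₀) (by rw [hh, one_mul]))
        have hrw2 : g * (c * σ₀) = c * (g * σ₀) := by
          rw [← mul_assoc, ← hcentral, mul_assoc]
        rw [if_neg d1, if_neg d2, hrw2, eps_c hc2 hΦ]
        ring
      have hd0 : dfun c g = 0 := by simp [dfun, hg1, hgc]
      rw [hsplit1, hsplit2, hd0]
      linarith [hmid, hlast]


lemma exists_cm (hc2 : c * c = 1) (hc1 : c ≠ 1) :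
    ∃ Φ : Finset G, ∀ g, g ∈ Φ ↔ c * g ∉ Φ := by
  classical
  have hequiv : Equivalence (fun a b : G => b = a ∨ b = c * a) := by
    constructor
    · intro a; left; rfl
    · intro a b hab
      rcases hab with h | h
      · left; rw [h]
      · right; rw [h, hcc hc2]
    · intro a b d hab hbd
      rcases hab with h | h <;> rcases hbd with h2 | h2
      · left; rw [h2, h]
      · right; rw [h2, h]
      · right; rw [h2, h]
      · left; rw [h2, h, hcc hc2]
  let s : Setoid G := ⟨fun a b : G => b = a ∨ b = c * a, hequiv⟩
  refine ⟨Finset.univ.filter (fun g => (Quotient.mk s g).out = g), fun g => ?_⟩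
  have hrel : (Quotient.mk s g).out = g ∨ (Quotient.mk s g).out = c * g := by
    obtain h | h : g = (Quotient.mk s g).out ∨ g = c * (Quotient.mk s g).out :=
      Quotient.exact (Quotient.out_eq (Quotient.mk s g))
    · exact Or.inl h.symm
    · refine Or.inr ?_
      generalize hE : (Quotient.mk s g).out = o at h ⊢
      rw [h, hcc hc2]
  have hsame : Quotient.mk s (c * g) = Quotient.mk s g :=
    Quotient.sound (Or.inr (hcc hc2 g).symm)
  simp only [Finset.mem_filter, Finset.mem_univ, true_and]
  rw [hsame]
  have hne : ¬((Quotient.mk s g).out = g ∧ (Quotient.mk s g).out = c * g) := by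
    rintro ⟨ha, hb⟩
    exact cne hc1 g (by rw [← hb, ha])
  constructor
  · intro ha hb; exact hne ⟨ha, hb⟩
  · intro hb
    rcases hrel with h | h
    · exact h
    · exact absurd h hb

lemma exists_cm_two (hc2 : c * c = 1) (hc1 : c ≠ 1) {h : G} (h1 : h ≠ 1) (h2 : h ≠ c) :
    ∃ Φ : Finset G, (∀ g, g ∈ Φ ↔ c * g ∉ Φ) ∧ (1:G) ∈ Φ ∧ h ∈ Φ := by
  obtain ⟨Φ₀, hΦ₀⟩ := exists_cm (c := c) hc2 hc1
  obtain ⟨Φ₁, hΦ₁, h1Φ⟩ : ∃ Φ₁ : Finset G, (∀ g, g ∈ Φ₁ ↔ c * g ∉ Φ₁) ∧ (1:G) ∈ Φ₁ := by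
    by_cases hm : (1:G) ∈ Φ₀
    · exact ⟨Φ₀, hΦ₀, hm⟩
    · have hcm : c ∈ Φ₀ := by
        have := hΦ₀ 1
        rw [mul_one] at this
        tauto
      refine ⟨insert (c * c) (Φ₀.erase c), flip_cm hc2 hc1 hΦ₀ hcm, ?_⟩
      rw [hc2]
      exact Finset.mem_insert_self _ _
  by_cases hm : h ∈ Φ₁
  · exact ⟨Φ₁, hΦ₁, h1Φ, hm⟩
  · have hch : c * h ∈ Φ₁ := (cm_notMem hc2 hΦ₁ h).2 hm
    refine ⟨insert (c * (c * h)) (Φ₁.erase (c * h)), flip_cm hc2 hc1 hΦ₁ hch, ?_, ?_⟩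
    · apply Finset.mem_insert_of_mem
      refine Finset.mem_erase.2 ⟨?_, h1Φ⟩
      intro e
      apply h2
      have e2 : c * h = 1 := e.symm
      rw [eq_inv_of_mul_eq_one_right e2, cinv hc2]
    · exact Finset.mem_insert.2 (Or.inl (hcc hc2 h).symm)


def Wmod (c : G) : Submodule ℚ (G → ℚ) where
  carrier := {a : G → ℚ | (∀ g : G, a (c * g) = -a g) ∧ ∀ g : G, a g⁻¹ = a g}
  add_mem' := by
    rintro a b ⟨ha1, ha2⟩ ⟨hb1, hb2⟩
    refine ⟨fun g => ?_, fun g => ?_⟩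
    · simp only [Pi.add_apply, ha1 g, hb1 g]; ring
    · simp only [Pi.add_apply, ha2 g, hb2 g]
  zero_mem' := ⟨fun g => by simp, fun g => by simp⟩
  smul_mem' := by
    rintro q a ⟨h1, h2⟩
    refine ⟨fun g => ?_, fun g => ?_⟩
    · simp only [Pi.smul_apply, smul_eq_mul, h1 g]; ring
    · simp only [Pi.smul_apply, smul_eq_mul, h2 g]

lemma ite_two (P : Prop) [Decidable P] : (if P then (2:ℚ) else 0) = 2 * (if P then 1 else 0) := by
  split <;> ring

end Stmt4Aux

open Stmt4Aux in
theorem stmt4 {G : Type*} [Group G] [Fintype G] [DecidableEq G] (c : G)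
    (hcentral : ∀ x : G, c * x = x * c) (hc2 : c * c = 1) (hc1 : c ≠ 1) :
    (Submodule.span ℚ
        {B : G → ℚ | ∃ Φ : Finset G, (∀ g : G, g ∈ Φ ↔ c * g ∉ Φ) ∧
          B = fun g => ∑ σ ∈ Φ, ∑ τ ∈ Φ, bQ c σ τ g} : Set (G → ℚ))
      = {a : G → ℚ | (∀ g : G, a (c * g) = -a g) ∧ ∀ g : G, a g⁻¹ = a g} := by
  classical
  set S := Submodule.span ℚ
      {B : G → ℚ | ∃ Φ : Finset G, (∀ g : G, g ∈ Φ ↔ c * g ∉ Φ) ∧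
        B = fun g => ∑ σ ∈ Φ, ∑ τ ∈ Φ, bQ c σ τ g} with hS
  apply Set.Subset.antisymm
  · -- span ⊆ W
    have hle : S ≤ Wmod c := by
      rw [hS]
      apply Submodule.span_le.2
      rintro B ⟨Φ, hΦ, rfl⟩
      rw [double_eq hc2 hc1 hΦ]
      exact ⟨fun g => bf_odd hc2 hΦ g, fun g => bf_even hcentral hc2 hc1 hΦ g⟩
    exact fun B hB => hle hB
  · -- W ⊆ span
    rintro a ⟨ha1, ha2⟩
    show a ∈ S
    have hBmem : ∀ (Φ : Finset G), (∀ g, g ∈ Φ ↔ c * g ∉ Φ) → Bf Φ ∈ S := fun Φ hΦ =>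
      Submodule.subset_span ⟨Φ, hΦ, (double_eq hc2 hc1 hΦ).symm⟩
    have hXmem : ∀ (Φ : Finset G), (∀ g, g ∈ Φ ↔ c * g ∉ Φ) → ∀ σ₀ ∈ Φ,
        (fun g => 2 * eps Φ (g * σ₀) + 2 * eps Φ (g⁻¹ * σ₀) - 4 * dfun c g) ∈ S := by
      intro Φ hΦ σ₀ hσ₀
      have heq : (fun g => 2 * eps Φ (g * σ₀) + 2 * eps Φ (g⁻¹ * σ₀) - 4 * dfun c g)
          = Bf Φ - Bf (insert (c * σ₀) (Φ.erase σ₀)) := by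
        funext g
        simp only [Pi.sub_apply]
        exact (key_diff hcentral hc2 hc1 hΦ hσ₀ g).symm
      rw [heq]
      exact Submodule.sub_mem S (hBmem Φ hΦ) (hBmem _ (flip_cm hc2 hc1 hΦ hσ₀))
    obtain ⟨Φ₀, hΦ₀⟩ := exists_cm (c := c) hc2 hc1
    have hΦ₀ne : Φ₀.Nonempty := by
      by_cases hm : (1:G) ∈ Φ₀
      · exact ⟨1, hm⟩
      · have hcm : c ∈ Φ₀ := by
          have := hΦ₀ 1
          rw [mul_one] at this
          tauto
        exact ⟨c, hcm⟩
    have hsum : ∑ σ₀ ∈ Φ₀, (fun g => 2 * eps Φ₀ (g * σ₀) + 2 * eps Φ₀ (g⁻¹ * σ₀) - 4 * dfun c g)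
        = (4:ℚ) • Bf Φ₀ - ((4 * (Φ₀.card : ℚ))) • dfun c := by
      funext g
      rw [Finset.sum_apply]
      simp only [Pi.sub_apply, Pi.smul_apply, smul_eq_mul]
      rw [Finset.sum_sub_distrib, Finset.sum_add_distrib, ← Finset.mul_sum, ← Finset.mul_sum,
        Finset.sum_const, nsmul_eq_mul]
      rw [show (∑ σ ∈ Φ₀, eps Φ₀ (g⁻¹ * σ)) = Bf Φ₀ g from bf_even hcentral hc2 hc1 hΦ₀ g]
      rw [show (∑ σ ∈ Φ₀, eps Φ₀ (g * σ)) = Bf Φ₀ g from rfl]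
      ring
    have hdmem : dfun c ∈ S := by
      have hXsum : ((4 * (Φ₀.card : ℚ))) • dfun c ∈ S := by
        have hmem := Submodule.sum_mem S
          (fun σ₀ hσ₀ => hXmem Φ₀ hΦ₀ σ₀ hσ₀)
        rw [hsum] at hmem
        have h4 : (4:ℚ) • Bf Φ₀ ∈ S := Submodule.smul_mem S _ (hBmem Φ₀ hΦ₀)
        have := Submodule.sub_mem S h4 hmem
        simpa using this
      have hne : (4 * (Φ₀.card : ℚ)) ≠ 0 :=
        mul_ne_zero (by norm_num) (Nat.cast_ne_zero.2 (Finset.card_ne_zero.2 hΦ₀ne))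
      have := Submodule.smul_mem S (4 * (Φ₀.card : ℚ))⁻¹ hXsum
      rwa [smul_smul, inv_mul_cancel₀ hne, one_smul] at this
    have hDmem : ∀ (Φ : Finset G), (∀ g, g ∈ Φ ↔ c * g ∉ Φ) → ∀ σ₀ ∈ Φ,
        (fun g => eps Φ (g * σ₀) + eps Φ (g⁻¹ * σ₀)) ∈ S := by
      intro Φ hΦ σ₀ hσ₀
      have heq : (fun g => eps Φ (g * σ₀) + eps Φ (g⁻¹ * σ₀))
          = (2⁻¹:ℚ) • ((fun g => 2 * eps Φ (g * σ₀) + 2 * eps Φ (g⁻¹ * σ₀) - 4 * dfun c g)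
            + (4:ℚ) • dfun c) := by
        funext g
        simp only [Pi.smul_apply, Pi.add_apply, smul_eq_mul]
        ring
      rw [heq]
      exact Submodule.smul_mem S _
        (Submodule.add_mem S (hXmem Φ hΦ σ₀ hσ₀) (Submodule.smul_mem S _ hdmem))
    have hwmem : ∀ h : G, wfun c h ∈ S := by
      intro h
      by_cases h1 : h = 1
      · subst h1
        have hw : wfun c 1 = (2:ℚ) • dfun c := by
          funext g
          have e1 : (g⁻¹ = (1:G)) = (g = 1) := propext inv_eq_one
          have e2 : (g⁻¹ = c) = (g = c) := propext (by rw [inv_eq_iff_eq_inv, cinv hc2])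
          simp only [wfun, dfun, Pi.smul_apply, smul_eq_mul, mul_one, e1, e2]
          ring
        rw [hw]
        exact Submodule.smul_mem S _ hdmem
      · by_cases h2 : h = c
        · rw [h2]
          have hw : wfun c c = (-2:ℚ) • dfun c := by
            funext g
            have e1 : (g⁻¹ = c) = (g = c) := propext (by rw [inv_eq_iff_eq_inv, cinv hc2])
            have e2 : (g⁻¹ = (1:G)) = (g = 1) := propext inv_eq_one
            simp only [wfun, dfun, Pi.smul_apply, smul_eq_mul, hc2, e1, e2]
            ring
          rw [hw]
          exact Submodule.smul_mem S _ hdmem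
        · obtain ⟨Φ, hΦ, h1Φ, hhΦ⟩ := exists_cm_two hc2 hc1 h1 h2
          have hΦ' := flip_cm hc2 hc1 hΦ hhΦ
          have h1Φ' : (1:G) ∈ insert (c * h) (Φ.erase h) :=
            Finset.mem_insert_of_mem (Finset.mem_erase.2 ⟨Ne.symm h1, h1Φ⟩)
          have hw : wfun c h = (2⁻¹:ℚ) •
              ((fun g => eps Φ (g * 1) + eps Φ (g⁻¹ * 1))
               - (fun g => eps (insert (c * h) (Φ.erase h)) (g * 1)
                    + eps (insert (c * h) (Φ.erase h)) (g⁻¹ * 1))) := by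
            funext g
            simp only [Pi.smul_apply, Pi.sub_apply, smul_eq_mul, mul_one]
            rw [eps_flip hc2 hc1 hΦ hhΦ g, eps_flip hc2 hc1 hΦ hhΦ g⁻¹]
            simp only [wfun, ite_two]
            ring
          rw [hw]
          exact Submodule.smul_mem S _
            (Submodule.sub_mem S (hDmem Φ hΦ 1 h1Φ) (hDmem _ hΦ' 1 h1Φ'))
    have hrep : a = ∑ h ∈ Finset.univ, (a h / 4) • wfun c h := by
      funext g
      rw [Finset.sum_apply]
      have c2 : ∀ x h : G, (x = c * h) = (c * x = h) :=
        fun x h => propext ⟨fun e => by rw [e, hcc hc2], fun e => by rw [← e, hcc hc2]⟩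
      simp only [Pi.smul_apply, smul_eq_mul, wfun, c2]
      simp only [mul_sub, mul_add, Finset.sum_sub_distrib, Finset.sum_add_distrib,
        mul_ite, mul_one, mul_zero, Finset.sum_ite_eq, Finset.mem_univ, if_true]
      rw [ha1 g, ha1 g⁻¹, ha2 g]
      ring
    rw [hrep]
    exact Submodule.sum_mem S (fun h _ => Submodule.smul_mem S _ (hwmem h))
end

section
/- Let G be a finite group and c ∈ G a central element of order exactly 2. Let M be the ℤ-module of functions a : G → ℤ such that g ↦ a(g) + a(cg) is constant on G. Let C ⊆ M be the submodule of constant functions and M₋ ⊆ M the submodule of functions with a(cg) = -a(g). Then C ∩ M₋ = 0 and the submodule C ⊕ M₋ has index 2 in M, i.e. M/(C + M₋) ≅ ℤ/2ℤ. -/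
section
variable {G : Type*} [Group G] (c : G)

/-- `a : G → ℤ` lies in `M` iff `g ↦ a(g) + a(cg)` is constant. -/
def memM (a : G → ℤ) : Prop := ∃ k : ℤ, ∀ g : G, a g + a (c * g) = k

/-- `a` is a constant function. -/
def memC (a : G → ℤ) : Prop := ∃ k : ℤ, ∀ g : G, a g = k

/-- `a` is anti-invariant: `a(cg) = -a(g)`. -/
def memMminus (a : G → ℤ) : Prop := ∀ g : G, a (c * g) = -a g

/-- `a` lies in the sum `C + M₋`. -/
def memSum (a : G → ℤ) : Prop :=
  ∃ u v : G → ℤ, memC u ∧ memMminus c v ∧ a = u + v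

end

open Classical in
/-- pairing setoid: `g ~ h` iff `h = g` or `h = c*g`. -/
def pairSetoid {G : Type*} [Group G] (c : G) (hc2 : c * c = 1) : Setoid G where
  r g h := h = g ∨ h = c * g
  iseqv := by
    constructor
    · intro g; exact Or.inl rfl
    · rintro g h (rfl | rfl)
      · exact Or.inl rfl
      · right; rw [← mul_assoc, hc2, one_mul]
    · rintro g h k (rfl | rfl) (rfl | rfl)
      · exact Or.inl rfl
      · exact Or.inr rfl
      · exact Or.inr rfl
      · left; rw [← mul_assoc, hc2, one_mul]

open Classical in
theorem stmt6 {G : Type*} [Group G] [Fintype G] (c : G)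
    (hcentral : ∀ x : G, c * x = x * c) (hc2 : c * c = 1) (hc1 : c ≠ 1) :
    (∀ a : G → ℤ, memC a → memMminus c a → a = 0) ∧
    (∃ m : G → ℤ, memM c m ∧ ¬ memSum c m ∧
      ∀ a : G → ℤ, memM c a → (memSum c a ∨ memSum c (a - m))) := by
  have hne : ∀ g : G, c * g ≠ g := by
    intro g h
    exact hc1 (mul_right_cancel (b := g) (by rw [h, one_mul]))
  constructor
  · intro a ⟨k, hk⟩ hmin
    have h1 : k = -k := by
      have := hmin 1
      rw [hk (c * 1), hk 1] at this
      exact this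
    have hk0 : k = 0 := by omega
    funext g
    simp [hk g, hk0]
  · -- key sufficiency lemma: constant sum even ⇒ in the sum
    have hsum : ∀ (a : G → ℤ) (t : ℤ), (∀ g, a g + a (c * g) = 2 * t) → memSum c a := by
      intro a t ht
      refine ⟨fun _ => t, fun g => a g - t, ⟨t, fun _ => rfl⟩, ?_, ?_⟩
      · intro g
        have := ht g
        show a (c * g) - t = -(a g - t)
        omega
      · funext g; simp
    set s := pairSetoid c hc2 with hs
    set m : G → ℤ := fun g => if g = (Quotient.mk s g).out then 1 else 0 with hm
    have hkey : ∀ g : G, m g + m (c * g) = 1 := by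
      intro g
      have hmk : (Quotient.mk s g) = Quotient.mk s (c * g) :=
        Quotient.sound (Or.inr rfl)
      have hm1 : m g = (if g = (Quotient.mk s g).out then 1 else 0) := rfl
      have hm2 : m (c * g) = (if c * g = (Quotient.mk s g).out then 1 else 0) := by
        rw [hm]; simp only [← hmk]
      set w : G := (Quotient.mk s g).out with hw
      have hout : w = g ∨ w = c * g := by
        have hr := Quotient.mk_out (s := s) g
        rcases hr with h | h
        · exact Or.inl h.symm
        · right
          rw [h, ← mul_assoc, hc2, one_mul]
      rw [hm1, hm2]
      rcases hout with h | h
      · rw [if_pos h.symm, if_neg (by rw [h]; exact hne g)] ; norm_num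
      · rw [if_neg (by rw [h]; exact fun hgg => hne g hgg.symm), if_pos h.symm] ; norm_num
    refine ⟨m, ⟨1, hkey⟩, ?_, ?_⟩
    · rintro ⟨u, v, ⟨t, hu⟩, hv, huv⟩
      have h1 := hkey 1
      have : m 1 = u 1 + v 1 := by rw [huv]; rfl
      have h2 : m (c * 1) = u (c * 1) + v (c * 1) := by rw [huv]; rfl
      rw [this, h2, hu 1, hu (c * 1), hv 1] at h1
      omega
    · intro a ⟨k, hk⟩
      rcases Int.even_or_odd k with ⟨t, ht⟩ | ⟨t, ht⟩
      · left
        exact hsum a t (fun g => by rw [hk g]; omega)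
      · right
        refine hsum (a - m) t (fun g => ?_)
        have := hkey g
        have := hk g
        simp only [Pi.sub_apply]
        omega
end

section
/- Let G be a finite group and c ∈ G central of order exactly 2. Let V₋ be the ℚ-vector space of functions a : G → ℚ with a(cg) = -a(g) for all g. Then every even function in V₋ (i.e. a(g⁻¹) = a(g) for all g) is a ℚ-linear combination of the functions b_{σ,τ} + b_{τ,σ} for σ, τ ∈ G, where b_{σ,τ}(g) = 1 if gσ = τ, -1 if gσ = cτ, 0 otherwise. -/
theorem stmt15 {G : Type*} [Group G] [Fintype G] [DecidableEq G] (c : G)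
    (hcentral : ∀ x : G, c * x = x * c) (hc2 : c * c = 1) (hc1 : c ≠ 1)
    (a : G → ℚ) (hanti : ∀ g : G, a (c * g) = -a g)
    (heven : ∀ g : G, a g⁻¹ = a g) :
    a ∈ Submodule.span ℚ
      {f : G → ℚ | ∃ σ τ : G, f = fun g => bQ c σ τ g + bQ c τ σ g} := by
  have hcinv : c⁻¹ = c := inv_eq_of_mul_eq_one_right hc2
  have hkey : a = ((4 * (Fintype.card G : ℚ))⁻¹) •
      ∑ σ : G, ∑ τ : G, a (τ * σ⁻¹) • (fun g => bQ c σ τ g + bQ c τ σ g) := by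
    funext g
    have hsum : ∀ σ : G, ∑ τ : G, a (τ * σ⁻¹) * (bQ c σ τ g + bQ c τ σ g) = 4 * a g := by
      intro σ
      have eA : ∀ x τ : G, a (τ * σ⁻¹) * bQ c σ τ x =
          (if τ = x * σ then a x else 0) + (if τ = c * (x * σ) then a x else 0) := by
        intro x τ
        unfold bQ
        by_cases h1 : x * σ = τ
        · subst h1
          have h2 : ¬ (x * σ = c * (x * σ)) := fun h => hc1 (right_eq_mul.mp h)
          simp [h2]
        · by_cases h2 : x * σ = c * τ
          · have hτ : τ = c * (x * σ) := by
              rw [h2, ← mul_assoc, hc2, one_mul]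
            have hna : ¬ (τ = x * σ) := fun h => h1 h.symm
            rw [if_neg h1, if_pos h2, if_neg hna, if_pos hτ]
            rw [hτ]
            have : c * (x * σ) * σ⁻¹ = c * x := by group
            rw [this, hanti]
            ring
          · have hna : ¬ (τ = x * σ) := fun h => h1 h.symm
            have hnb : ¬ (τ = c * (x * σ)) := by
              intro h
              apply h2
              rw [h, ← mul_assoc, hc2, one_mul]
            rw [if_neg h1, if_neg h2, if_neg hna, if_neg hnb]
            ring
      have eB : ∀ τ : G, a (τ * σ⁻¹) * bQ c τ σ g =
          (if τ = g⁻¹ * σ then a g else 0) + (if τ = c * (g⁻¹ * σ) then a g else 0) := by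
        intro τ
        unfold bQ
        by_cases h1 : g * τ = σ
        · have hτ : τ = g⁻¹ * σ := by rw [← h1]; group
          have h2 : ¬ (τ = c * (g⁻¹ * σ)) := fun h =>
            hc1 (right_eq_mul.mp (hτ.symm.trans h))
          rw [if_pos h1, if_pos hτ, if_neg h2, hτ]
          have : g⁻¹ * σ * σ⁻¹ = g⁻¹ := by group
          rw [this, heven]
          ring
        · by_cases h2 : g * τ = c * σ
          · have haux : g * (c * (g⁻¹ * σ)) = c * σ := by
              rw [hcentral (g⁻¹ * σ)]
              calc g * (g⁻¹ * σ * c) = σ * c := by group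
                _ = c * σ := (hcentral σ).symm
            have hτ : τ = c * (g⁻¹ * σ) := mul_left_cancel (h2.trans haux.symm)
            have hna : ¬ (τ = g⁻¹ * σ) := by
              intro h
              apply h1
              rw [h]; group
            rw [if_neg h1, if_pos h2, if_neg hna, if_pos hτ, hτ]
            have : c * (g⁻¹ * σ) * σ⁻¹ = c * g⁻¹ := by group
            rw [this, hanti, heven]
            ring
          · have hna : ¬ (τ = g⁻¹ * σ) := by
              intro h; apply h1; rw [h]; group
            have hnb : ¬ (τ = c * (g⁻¹ * σ)) := by
              intro h
              apply h2
              rw [h, hcentral]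
              calc g * (g⁻¹ * σ * c) = σ * c := by group
                _ = c * σ := (hcentral σ).symm
            rw [if_neg h1, if_neg h2, if_neg hna, if_neg hnb]
            ring
      calc ∑ τ : G, a (τ * σ⁻¹) * (bQ c σ τ g + bQ c τ σ g)
          = ∑ τ : G, (((if τ = g * σ then a g else 0) + (if τ = c * (g * σ) then a g else 0))
            + ((if τ = g⁻¹ * σ then a g else 0) + (if τ = c * (g⁻¹ * σ) then a g else 0))) := by
            refine Finset.sum_congr rfl fun τ _ => ?_
            rw [mul_add, eA g τ, eB τ]
        _ = 4 * a g := by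
            simp [Finset.sum_add_distrib, Finset.sum_ite_eq']
            ring
    have hcard : (Fintype.card G : ℚ) ≠ 0 := Nat.cast_ne_zero.mpr Fintype.card_ne_zero
    simp only [Pi.smul_apply, Finset.sum_apply, smul_eq_mul]
    rw [Finset.sum_congr rfl fun σ _ => hsum σ]
    rw [Finset.sum_const, Finset.card_univ]
    field_simp
    ring
  rw [hkey]
  exact Submodule.smul_mem _ _ (Submodule.sum_mem _ fun σ _ => Submodule.sum_mem _ fun τ _ =>
    Submodule.smul_mem _ _ (Submodule.subset_span ⟨σ, τ, rfl⟩))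
end
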